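/- Let A be a commutative ring and φ a continuous A-algebra endomorphism of A((t)) with φ(t) = g, ν(g) = d ≥ 1 pointwise on Spec A (assume Spec A connected so d ∈ ℤ). Then for every ω = f dt ∈ Ω̃¹_{A((t))}, one has res(φ(ω)) = d · res(ω), where φ(f dt) := φ(f) g' dt. -/

import Mathlib

noncomputable def lderiv {A : Type*} [CommRing A] (f : LaurentSeries A) : LaurentSeries A where
  coeff l := (l + 1) • f.coeff (l + 1)
  isPWO_support' := by
    refine Set.IsPWO.mono ((f.isPWO_support.image_of_monotone
      (f := fun l : ℤ => l - 1) (fun a b h => by simpa using h))) ?_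
    intro l hl
    have h1 : f.coeff (l + 1) ≠ 0 := by
      intro h; simp [Function.mem_support, h] at hl
    exact ⟨l + 1, h1, by ring⟩
namespace Stmt17
variable {A : Type*} [CommRing A]
lemma lderiv_coeff (f : LaurentSeries A) (l : ℤ) :
    (lderiv f).coeff l = (l + 1) • f.coeff (l + 1) := rfl
lemma lderiv_support_subset (f : LaurentSeries A) :
    (lderiv f).support ⊆ (fun l : ℤ => l - 1) '' f.support := by
  intro l hl
  have h1 : f.coeff (l + 1) ≠ 0 := by
    intro h; simp [Function.mem_support, lderiv_coeff, h] at hl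
  exact ⟨l + 1, h1, by ring⟩

lemma lderiv_add (x y : LaurentSeries A) : lderiv (x + y) = lderiv x + lderiv y := by
  ext l; simp [lderiv_coeff, smul_add]

lemma lderiv_coeff_neg_one (f : LaurentSeries A) : (lderiv f).coeff (-1) = 0 := by
  simp [lderiv_coeff]

lemma lderiv_one : lderiv (1 : LaurentSeries A) = 0 := by
  ext l
  rw [lderiv_coeff, ← HahnSeries.single_zero_one]
  rcases eq_or_ne (l + 1) (0:ℤ) with h | h
  · simp [h]
  · simp [HahnSeries.coeff_single, h]

lemma shift_isPWO (S : Set ℤ) (hS : S.IsPWO) : ((fun l : ℤ => l - 1) '' S).IsPWO :=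
  hS.image_of_monotone (fun a b h => by simpa using h)

theorem lderiv_mul (x y : LaurentSeries A) :
    lderiv (x * y) = lderiv x * y + x * lderiv y := by
  ext l
  rw [HahnSeries.coeff_add, lderiv_coeff]
  have hSx := shift_isPWO _ x.isPWO_support
  have hSy := shift_isPWO _ y.isPWO_support
  have e1 : (lderiv x * y).coeff l =
      ∑ ij ∈ Finset.addAntidiagonal x.isPWO_support y.isPWO_support (l+1),
        ij.1 • (x.coeff ij.1 * y.coeff ij.2) := by
    rw [HahnSeries.coeff_mul_left' hSx (lderiv_support_subset x)]
    refine Finset.sum_nbij' (i := fun p : ℤ × ℤ => (p.1 + 1, p.2))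
      (j := fun p : ℤ × ℤ => (p.1 - 1, p.2)) ?_ ?_ ?_ ?_ ?_
    · rintro ⟨a, b⟩ hab
      rw [Finset.mem_addAntidiagonal] at hab; apply Finset.mem_addAntidiagonal.mpr
      obtain ⟨⟨c, hc, hc'⟩, hb, hab⟩ := hab
      dsimp only at hc' hab ⊢
      refine ⟨?_, hb, by omega⟩
      have hca : c = a + 1 := by omega
      rwa [← hca]
    · rintro ⟨a, b⟩ hab
      replace hab := Finset.mem_addAntidiagonal.mp hab; rw [Finset.mem_addAntidiagonal]
      dsimp only at hab ⊢
      exact ⟨⟨a, hab.1, rfl⟩, hab.2.1, by omega⟩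
    · rintro ⟨a, b⟩ _; simp
    · rintro ⟨a, b⟩ _; simp
    · rintro ⟨a, b⟩ hab
      dsimp only
      rw [lderiv_coeff, smul_mul_assoc]
  have e2 : (x * lderiv y).coeff l =
      ∑ ij ∈ Finset.addAntidiagonal x.isPWO_support y.isPWO_support (l+1),
        ij.2 • (x.coeff ij.1 * y.coeff ij.2) := by
    rw [HahnSeries.coeff_mul_right' hSy (lderiv_support_subset y)]
    refine Finset.sum_nbij' (i := fun p : ℤ × ℤ => (p.1, p.2 + 1))
      (j := fun p : ℤ × ℤ => (p.1, p.2 - 1)) ?_ ?_ ?_ ?_ ?_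
    · rintro ⟨a, b⟩ hab
      rw [Finset.mem_addAntidiagonal] at hab; apply Finset.mem_addAntidiagonal.mpr
      obtain ⟨ha, ⟨c, hc, hc'⟩, hab⟩ := hab
      dsimp only at hc' hab ⊢
      refine ⟨ha, ?_, by omega⟩
      have hcb : c = b + 1 := by omega
      rwa [← hcb]
    · rintro ⟨a, b⟩ hab
      replace hab := Finset.mem_addAntidiagonal.mp hab; rw [Finset.mem_addAntidiagonal]
      dsimp only at hab ⊢
      exact ⟨hab.1, ⟨b, hab.2.1, rfl⟩, by omega⟩
    · rintro ⟨a, b⟩ _; simp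
    · rintro ⟨a, b⟩ _; simp
    · rintro ⟨a, b⟩ hab
      dsimp only
      rw [lderiv_coeff, mul_smul_comm]
  rw [e1, e2, ← Finset.sum_add_distrib, HahnSeries.coeff_mul, Finset.smul_sum]
  refine Finset.sum_congr rfl (fun ij hij => ?_)
  replace hij := Finset.mem_addAntidiagonal.mp hij
  rw [← hij.2.2, add_smul]
lemma coeff_mul_eq_zero_lo {x y : LaurentSeries A} {a b l : ℤ}
    (hx : ∀ i < a, x.coeff i = 0) (hy : ∀ j < b, y.coeff j = 0) (hl : l < a + b) :
    (x * y).coeff l = 0 := by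
  rw [HahnSeries.coeff_mul]
  refine Finset.sum_eq_zero ?_
  rintro ⟨i, j⟩ hij
  rw [Finset.mem_addAntidiagonal] at hij
  dsimp only
  rcases lt_or_ge i a with hi | hi
  · rw [hx i hi, zero_mul]
  · rw [hy j (by omega), mul_zero]

lemma coeff_mul_eq_zero_hi {x y : LaurentSeries A} {a b l : ℤ}
    (hx : ∀ i, a < i → x.coeff i = 0) (hy : ∀ j, b < j → y.coeff j = 0) (hl : a + b < l) :
    (x * y).coeff l = 0 := by
  rw [HahnSeries.coeff_mul]
  refine Finset.sum_eq_zero ?_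
  rintro ⟨i, j⟩ hij
  rw [Finset.mem_addAntidiagonal] at hij
  dsimp only
  rcases lt_or_ge a i with hi | hi
  · rw [hx i hi, zero_mul]
  · rw [hy j (by omega), mul_zero]

lemma zsmul_coeff (n : ℤ) (z : LaurentSeries A) (l : ℤ) :
    (n • z).coeff l = n • z.coeff l := by
  rw [zsmul_eq_mul, ← map_intCast (HahnSeries.C : A →+* LaurentSeries A) n,
    HahnSeries.C_apply, HahnSeries.coeff_single_zero_mul, zsmul_eq_mul]

lemma lderiv_pow (x : LaurentSeries A) (n : ℕ) :
    lderiv (x ^ (n + 1)) = ((n : ℤ) + 1) • (x ^ n * lderiv x) := by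
  induction n with
  | zero => simp
  | succ n ih =>
    have zs : ∀ (m : ℤ) (z : LaurentSeries A), m • z = (m : LaurentSeries A) * z :=
      fun m z => zsmul_eq_mul z m
    rw [pow_succ, lderiv_mul, ih]
    simp only [zs]
    push_cast
    ring

section Map

variable {R : Type*} [CommRing R] (f : R →+* A)

lemma map_eq_map' (z : LaurentSeries R) : z.map f = z.map f.toNonUnitalRingHom := by
  ext; rfl

lemma lmap_mul (x y : LaurentSeries R) : (x * y).map f = x.map f * y.map f := by
  rw [map_eq_map', map_eq_map', map_eq_map', HahnSeries.map_mul]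

lemma lmap_one : (1 : LaurentSeries R).map f = 1 := by
  have : (1 : LaurentSeries R).map f = (1 : LaurentSeries R).map f.toMonoidWithZeroHom := by ext; simp
  rw [this, HahnSeries.map_one]

lemma lmap_pow (x : LaurentSeries R) (n : ℕ) :
    (x ^ n).map f = ((x.map f : LaurentSeries A) ^ n) := by
  induction n with
  | zero => rw [pow_zero, pow_zero, lmap_one]
  | succ n ih => rw [pow_succ, pow_succ, lmap_mul, ih]

lemma lmap_lderiv (x : LaurentSeries R) : (lderiv x).map f = lderiv (x.map f) := by
  ext l
  rw [HahnSeries.map_coeff, lderiv_coeff, lderiv_coeff, HahnSeries.map_coeff, map_zsmul]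

end Map

/-- Key combinatorial lemma: the residue of `hⁿ·h'` vanishes, over any commutative ring. -/
theorem res_pow_mul_lderiv (h : LaurentSeries A) (n : ℕ) :
    (h ^ n * lderiv h).coeff (-1) = 0 := by
  classical
  let H : LaurentSeries (MvPolynomial ℤ ℤ) :=
    { coeff := fun l => if h.coeff l ≠ 0 then MvPolynomial.X l else 0
      isPWO_support' := h.isPWO_support.mono (by
        intro l hl
        simp only [Function.mem_support, ne_eq, ite_eq_right_iff, not_forall] at hl
        exact hl.choose) }
  let ev : MvPolynomial ℤ ℤ →+* A := (MvPolynomial.aeval (fun l : ℤ => h.coeff l)).toRingHom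
  have hmapH : H.map ev = h := by
    ext l
    rw [HahnSeries.map_coeff]
    show ev (if h.coeff l ≠ 0 then MvPolynomial.X l else 0) = h.coeff l
    split
    · simp [ev]
    · simp only [map_zero]
      next hne => exact (not_not.mp hne).symm
  have key : (H ^ n * lderiv H).coeff (-1) = 0 := by
    have h2 : ((n : ℤ) + 1) • (H ^ n * lderiv H).coeff (-1) = 0 := by
      have h0 := congrArg (fun z : LaurentSeries (MvPolynomial ℤ ℤ) => z.coeff (-1))
        (lderiv_pow H n)
      rw [lderiv_coeff_neg_one, zsmul_coeff] at h0
      exact h0.symm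
    rw [zsmul_eq_mul] at h2
    rcases mul_eq_zero.mp h2 with h3 | h3
    · exfalso
      have : ((n : ℤ) + 1) ≠ 0 := by omega
      exact this (by exact_mod_cast h3)
    · exact h3
  calc (h ^ n * lderiv h).coeff (-1)
      = (((H.map ev) ^ n : LaurentSeries A) * lderiv (H.map ev)).coeff (-1) := by rw [hmapH]
    _ = (((H ^ n) * lderiv H).map ev).coeff (-1) := by
        rw [← lmap_pow, ← lmap_lderiv, ← lmap_mul]
    _ = ev (((H ^ n) * lderiv H).coeff (-1)) := by rw [HahnSeries.map_coeff]
    _ = 0 := by rw [key, map_zero]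

lemma coeff_ofPS_neg (ψ : PowerSeries A) {l : ℤ} (hl : l < 0) :
    (HahnSeries.ofPowerSeries ℤ A ψ).coeff l = 0 := by
  rw [HahnSeries.ofPowerSeries_apply]
  apply HahnSeries.embDomain_notin_range
  rintro ⟨n, hn⟩
  change ((n:ℕ):ℤ) = l at hn
  omega

lemma lderiv_single (m : ℤ) (r : A) :
    lderiv (HahnSeries.single m r) = m • HahnSeries.single (m - 1) r := by
  ext l
  rw [lderiv_coeff, zsmul_coeff, HahnSeries.coeff_single, HahnSeries.coeff_single]
  rcases eq_or_ne l (m - 1) with h | h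
  · rw [if_pos h, if_pos (by omega), h]
    rw [show m - 1 + 1 = m by ring]
  · rw [if_neg h, if_neg (by omega)]; simp

lemma bound_below (z : LaurentSeries A) : ∃ m : ℤ, ∀ l < m, z.coeff l = 0 := by
  rcases eq_or_ne z 0 with h | h
  · exact ⟨0, fun l _ => by simp [h]⟩
  · exact ⟨z.order, fun l hl => HahnSeries.coeff_eq_zero_of_lt_order hl⟩

lemma sum_coeff {ι : Type*} (T : Finset ι) (F : ι → LaurentSeries A) (l : ℤ) :
    (∑ n ∈ T, F n).coeff l = ∑ n ∈ T, (F n).coeff l :=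
  map_sum (HahnSeries.coeff.addMonoidHom l) F T

end Stmt17

/-- A sequence of Laurent series tends to `0` in the `t`-adic (Laurent series) topology. -/
def LSTendsToZero {A : Type*} [CommRing A] (s : ℕ → LaurentSeries A) : Prop :=
  ∀ N : ℤ, ∃ I : ℕ, ∀ i ≥ I, ∀ l < N, (s i).coeff l = 0

open Stmt17 in
theorem stmt17 (A : Type*) [CommRing A] (d : ℤ) (hd : 1 ≤ d)
    (u : Aˣ) (a : PowerSeries A) (gm : LaurentSeries A)
    (hgmnil : IsNilpotent gm) (hgmneg : ∀ l : ℤ, 0 ≤ l → gm.coeff l = 0)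
    (g : LaurentSeries A)
    (hg : g = HahnSeries.single d 1 * HahnSeries.C (u : A) *
      HahnSeries.ofPowerSeries ℤ A (1 + PowerSeries.X * a) * (1 + gm))
    (φ : LaurentSeries A →ₐ[A] LaurentSeries A)
    (hcont : ∀ s : ℕ → LaurentSeries A, LSTendsToZero s → LSTendsToZero (fun i => φ (s i)))
    (hφt : φ (HahnSeries.single (1 : ℤ) 1) = g) :
    ∀ f : LaurentSeries A, (φ f * lderiv g).coeff (-1) = d • f.coeff (-1) := by
  classical
  intro f
  set s : LaurentSeries A := HahnSeries.single d 1 with hs_def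
  set c : LaurentSeries A := HahnSeries.C (u : A) with hc_def
  set p : LaurentSeries A := HahnSeries.ofPowerSeries ℤ A (1 + PowerSeries.X * a) with hp_def
  set hh : LaurentSeries A := 1 + gm with hhh_def
  -- inverses of the four factors
  set si : LaurentSeries A := HahnSeries.single (-d) (1:A) with hsi_def
  have hs1 : s * si = 1 := by
    rw [hs_def, hsi_def, HahnSeries.single_mul_single, add_neg_cancel, one_mul,
      HahnSeries.single_zero_one]
  set ci : LaurentSeries A := HahnSeries.C ((u⁻¹ : Aˣ) : A) with hci_def
  have hc1 : c * ci = 1 := by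
    rw [hc_def, hci_def, ← map_mul, Units.mul_inv, map_one]
  have hPu : IsUnit (1 + PowerSeries.X * a) := by
    rw [PowerSeries.isUnit_iff_constantCoeff]
    simp
  obtain ⟨V, hV⟩ := hPu
  set pi : LaurentSeries A :=
    HahnSeries.ofPowerSeries ℤ A ((V⁻¹ : (PowerSeries A)ˣ) : PowerSeries A) with hpi_def
  have hp1 : p * pi = 1 := by
    rw [hp_def, hpi_def, ← hV, ← map_mul, Units.mul_inv, map_one]
  obtain ⟨K, hK⟩ := hgmnil
  set hi : LaurentSeries A := ∑ k ∈ Finset.range K, (-gm) ^ k with hi_def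
  have hh1 : hh * hi = 1 := by
    have hgs := geom_sum_mul (-gm) K
    have hKn : (-gm) ^ K = 0 := by
      rw [show -gm = (-1 : LaurentSeries A) * gm by ring, mul_pow, hK, mul_zero]
    rw [hKn] at hgs
    rw [hhh_def, hi_def]
    linear_combination -hgs
  set gi : LaurentSeries A := si * (ci * (pi * hi)) with gi_def
  have hginv : g * gi = 1 := by
    rw [hg, gi_def]
    calc s * c * p * hh * (si * (ci * (pi * hi)))
        = (s * si) * ((c * ci) * ((p * pi) * (hh * hi))) := by ring
      _ = 1 := by rw [hs1, hc1, hp1, hh1]; simp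
  -- decomposition of gi * g'
  have hgd : gi * lderiv g
      = lderiv s * si + (lderiv c * ci + (lderiv p * pi + lderiv hh * hi)) := by
    have expand : gi * lderiv g
        = (c*ci)*((p*pi)*((hh*hi)*(lderiv s * si)))
        + ((s*si)*((p*pi)*((hh*hi)*(lderiv c * ci)))
        + ((s*si)*((c*ci)*((hh*hi)*(lderiv p * pi)))
        + (s*si)*((c*ci)*((p*pi)*(lderiv hh * hi))))) := by
      rw [hg, gi_def]
      rw [lderiv_mul, lderiv_mul, lderiv_mul]; ring
    rw [expand, hs1, hc1, hp1, hh1]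
    simp
  -- residue of gi * g' is d
  have hres1 : (gi * lderiv g).coeff (-1) = d • (1:A) := by
    rw [hgd, HahnSeries.coeff_add, HahnSeries.coeff_add, HahnSeries.coeff_add]
    have t1 : (lderiv s * si).coeff (-1) = d • (1:A) := by
      rw [hs_def, hsi_def, lderiv_single, zsmul_eq_mul, mul_assoc, ← zsmul_eq_mul,
        zsmul_coeff, HahnSeries.single_mul_single, one_mul,
        show d - 1 + -d = (-1 : ℤ) by ring, HahnSeries.coeff_single_same]
    have t2 : lderiv c = 0 := by
      rw [hc_def, HahnSeries.C_apply, lderiv_single, zero_zsmul]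
    have t3 : (lderiv p * pi).coeff (-1) = 0 := by
      refine coeff_mul_eq_zero_lo (a := 0) (b := 0) ?_ ?_ (by norm_num)
      · intro i hi0
        rw [hp_def, lderiv_coeff]
        rcases eq_or_ne (i + 1) 0 with h | h
        · rw [h, zero_zsmul]
        · rw [coeff_ofPS_neg _ (by omega), smul_zero]
      · intro j hj0
        rw [hpi_def, coeff_ofPS_neg _ hj0]
    have hQ : ∀ k : ℕ, ∀ l : ℤ, -(k:ℤ) < l → ((-gm) ^ k).coeff l = 0 := by
      intro k
      induction k with
      | zero =>
        intro l hl
        rw [pow_zero, ← HahnSeries.single_zero_one,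
          HahnSeries.coeff_single_of_ne (by omega)]
      | succ k ih =>
        intro l hl
        rw [pow_succ]
        refine coeff_mul_eq_zero_hi (a := -(k:ℤ)) (b := -1) ih ?_ (by push_cast at hl ⊢; omega)
        intro j hj
        rw [HahnSeries.coeff_neg, hgmneg j (by omega), neg_zero]
    have t4 : (lderiv hh * hi).coeff (-1) = 0 := by
      refine coeff_mul_eq_zero_hi (a := -2) (b := 0) ?_ ?_ (by norm_num)
      · intro i hi2
        rw [hhh_def, lderiv_add, lderiv_one, zero_add, lderiv_coeff]
        rcases eq_or_ne (i + 1) 0 with h | h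
        · rw [h, zero_zsmul]
        · rw [hgmneg (i+1) (by omega), smul_zero]
      · intro j hj
        rw [hi_def, sum_coeff]
        refine Finset.sum_eq_zero fun k _ => hQ k j (by omega)
    rw [t1, t2, t3, t4, zero_mul, HahnSeries.coeff_zero]
    simp
  -- the unit G
  set G : (LaurentSeries A)ˣ := ⟨g, gi, hginv, by rw [mul_comm]; exact hginv⟩ with hG_def
  have hrel : lderiv g * gi + g * lderiv gi = 0 := by
    have h0 := congrArg lderiv hginv
    rw [lderiv_mul, lderiv_one] at h0
    exact h0
  have hGval : ∀ k : ℕ, ((G ^ (Int.negSucc k) : (LaurentSeries A)ˣ) : LaurentSeries A)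
      = gi ^ (k+1) := by
    intro k
    rw [zpow_negSucc, ← inv_pow, Units.val_pow_eq_pow_val]
    rfl
  have resG : ∀ n : ℤ, (((G ^ n : (LaurentSeries A)ˣ) : LaurentSeries A) * lderiv g).coeff (-1)
      = if n = -1 then d • (1:A) else 0 := by
    intro n
    cases n with
    | ofNat k =>
      simp only [Int.ofNat_eq_coe]
      have hv : ((G ^ ((k:ℕ):ℤ) : (LaurentSeries A)ˣ) : LaurentSeries A) = g ^ k := by
        rw [zpow_natCast, Units.val_pow_eq_pow_val]
      rw [hv, res_pow_mul_lderiv g k, if_neg (show ¬(((k:ℕ):ℤ) = -1) by omega)]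
    | negSucc k =>
      rw [hGval k]
      cases k with
      | zero =>
        rw [pow_one, if_pos (by decide)]
        exact hres1
      | succ j =>
        have key : gi ^ (j+1+1) * lderiv g = -(gi ^ j * lderiv gi) := by
          linear_combination gi ^ (j+1) * hrel - gi ^ j * lderiv gi * hginv
        rw [key, HahnSeries.coeff_neg, res_pow_mul_lderiv gi j, neg_zero,
          if_neg (by simp only [Int.negSucc_eq]; push_cast; omega)]
  -- φ on monomials
  have hpow : ∀ k : ℕ, φ (HahnSeries.single (k:ℤ) 1) = g ^ k := by
    intro k
    have h1 : (HahnSeries.single (k:ℤ) (1:A)) = (HahnSeries.single (1:ℤ) 1) ^ k := by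
      rw [HahnSeries.single_pow, one_pow, nsmul_eq_mul, mul_one]
    rw [h1, map_pow, hφt]
  have hmono : ∀ n : ℤ, φ (HahnSeries.single n (1:A))
      = ((G ^ n : (LaurentSeries A)ˣ) : LaurentSeries A) := by
    intro n
    cases n with
    | ofNat k =>
      simp only [Int.ofNat_eq_coe]
      rw [zpow_natCast, Units.val_pow_eq_pow_val]
      exact hpow k
    | negSucc k =>
      have hneg : φ (HahnSeries.single (Int.negSucc k) 1) * g ^ (k+1) = 1 := by
        rw [← hpow (k+1), ← map_mul, HahnSeries.single_mul_single]
        rw [show (Int.negSucc k) + (((k+1 : ℕ)) : ℤ) = (0:ℤ) by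
            simp only [Int.negSucc_eq]; push_cast; ring, one_mul,
          HahnSeries.single_zero_one, map_one]
      rw [hGval k]
      calc φ (HahnSeries.single (Int.negSucc k) 1)
          = φ (HahnSeries.single (Int.negSucc k) 1) * (g ^ (k+1) * gi ^ (k+1)) := by
            rw [← mul_pow, hginv, one_pow, mul_one]
        _ = (φ (HahnSeries.single (Int.negSucc k) 1) * g ^ (k+1)) * gi ^ (k+1) := by ring
        _ = gi ^ (k+1) := by rw [hneg, one_mul]
  -- truncation and continuity
  obtain ⟨m, hm⟩ := bound_below (lderiv g)
  obtain ⟨m0, hm0⟩ := bound_below f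
  let trunc : ℕ → LaurentSeries A := fun i =>
    { coeff := fun l => if l < (i:ℤ) then f.coeff l else 0
      isPWO_support' := f.isPWO_support.mono (fun l hl => by
        simp only [Function.mem_support] at hl ⊢
        intro h0
        apply hl
        rw [h0]
        exact ite_self 0) }
  have hTZ : LSTendsToZero (fun i => f - trunc i) := by
    intro N
    refine ⟨N.toNat, fun i hi l hl => ?_⟩
    have hli : l < (i:ℤ) := by omega
    show (f - trunc i).coeff l = 0
    rw [HahnSeries.coeff_sub]
    show f.coeff l - (if l < (i:ℤ) then f.coeff l else 0) = 0
    rw [if_pos hli, sub_self]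
  obtain ⟨I, hI⟩ := hcont _ hTZ (-m)
  set T : Set ℤ := {l | f.coeff l ≠ 0 ∧ l < (I:ℤ)} with hT_def
  have hTfin : T.Finite := by
    refine Set.Finite.subset (Set.finite_Icc m0 (I:ℤ)) (fun l hl => ?_)
    obtain ⟨h1, h2⟩ := hl
    refine ⟨?_, le_of_lt h2⟩
    by_contra hc
    exact h1 (hm0 l (by omega))
  set T' : Finset ℤ := hTfin.toFinset with hT'_def
  have hmemT' : ∀ l : ℤ, l ∈ T' ↔ (f.coeff l ≠ 0 ∧ l < (I:ℤ)) := by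
    intro l
    rw [hT'_def, Set.Finite.mem_toFinset, hT_def]
    rfl
  have htrunc : trunc I = ∑ n ∈ T', HahnSeries.C (f.coeff n) * HahnSeries.single n (1:A) := by
    ext l
    rw [sum_coeff]
    show (if l < (I:ℤ) then f.coeff l else 0) = _
    have hterm : ∀ n : ℤ, (HahnSeries.C (f.coeff n) * HahnSeries.single n (1:A)).coeff l
        = if l = n then f.coeff n else 0 := by
      intro n
      rw [HahnSeries.C_apply, HahnSeries.single_mul_single, zero_add, mul_one,
        HahnSeries.coeff_single]
      by_cases h : l = n
      · rw [if_pos h, if_pos h]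
      · rw [if_neg h, if_neg h]
    simp only [hterm]
    by_cases hl : l ∈ T'
    · rw [Finset.sum_eq_single l
        (fun n _ hn => by rw [if_neg (Ne.symm hn)])
        (fun h => absurd hl h)]
      rw [if_pos rfl, if_pos ((hmemT' l).mp hl).2]
    · rw [Finset.sum_eq_zero (fun n hn => by
        rcases eq_or_ne l n with h | h
        · exact absurd (h ▸ hn) hl
        · rw [if_neg h])]
      split
      · next hlI =>
        by_contra hc
        exact hl ((hmemT' l).mpr ⟨hc, hlI⟩)
      · rfl
  have hsplit : (φ f * lderiv g).coeff (-1)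
      = (φ (trunc I) * lderiv g).coeff (-1) + (φ (f - trunc I) * lderiv g).coeff (-1) := by
    conv_lhs => rw [show f = trunc I + (f - trunc I) by ring]
    rw [map_add, add_mul, HahnSeries.coeff_add]
  have hzero2 : (φ (f - trunc I) * lderiv g).coeff (-1) = 0 :=
    coeff_mul_eq_zero_lo (a := -m) (b := m) (hI I le_rfl) hm (by omega)
  have hmain : (φ (trunc I) * lderiv g).coeff (-1) = d • f.coeff (-1) := by
    rw [htrunc, map_sum, Finset.sum_mul, sum_coeff]
    have hC : ∀ r : A, φ (HahnSeries.C r) = HahnSeries.C r := by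
      intro r
      have h1 : (HahnSeries.C r : LaurentSeries A) = algebraMap A (LaurentSeries A) r := by
        rw [HahnSeries.algebraMap_apply', PowerSeries.algebraMap_apply,
          Algebra.algebraMap_self_apply, HahnSeries.ofPowerSeries_C]
      rw [h1]
      exact φ.commutes r
    have e : ∀ n ∈ T',
        (φ (HahnSeries.C (f.coeff n) * HahnSeries.single n (1:A)) * lderiv g).coeff (-1)
        = if n = (-1:ℤ) then f.coeff n * (d • (1:A)) else 0 := by
      intro n _
      rw [map_mul, hC, mul_assoc, HahnSeries.C_apply, HahnSeries.coeff_single_zero_mul,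
        hmono n, resG n]
      split <;> simp
    rw [Finset.sum_congr rfl e,
      Finset.sum_ite_eq' T' (-1 : ℤ) (fun n => f.coeff n * (d • (1:A)))]
    by_cases hmem : (-1:ℤ) ∈ T'
    · rw [if_pos hmem, mul_smul_comm, mul_one]
    · rw [if_neg hmem]
      have hfz : f.coeff (-1) = 0 := by
        by_contra hc
        exact hmem ((hmemT' (-1)).mpr ⟨hc, by omega⟩)
      rw [hfz, smul_zero]
  rw [hsplit, hzero2, hmain, add_zero]
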